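/- Let Γ be a chordal graph with a perfect elimination ordering. If C is the edge set of a cycle in Γ, then there exist distinct edges e, e' ∈ C with h(e) = h(e'), and moreover any two distinct edges e, e' with h(e) = h(e') are contained in a cycle of Γ with exactly 3 edges. -/

import Mathlib

open SimpleGraph

section Defs

variable {V : Type*}

/-- The larger endpoint (head) of an edge, with respect to a linear order on vertices. -/
def esup [LinearOrder V] (e : Sym2 V) : V :=
  Sym2.lift ⟨fun a b => a ⊔ b, fun a b => sup_comm a b⟩ e

/-- The smaller endpoint (tail) of an edge. -/
def einf [LinearOrder V] (e : Sym2 V) : V :=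
  Sym2.lift ⟨fun a b => a ⊓ b, fun a b => inf_comm a b⟩ e

/-- The order on edges induced by a linear order on vertices:
`e < e'` iff `h(e) < h(e')`, or `h(e) = h(e')` and `t(e) < t(e')`. -/
def edgeLT [LinearOrder V] (e f : Sym2 V) : Prop :=
  esup e < esup f ∨ (esup e = esup f ∧ einf e < einf f)

/-- The linear order on the vertices is a perfect elimination ordering: every vertex is
simplicial in the induced subgraph on the vertices below it. -/
def IsPEO [LinearOrder V] (G : SimpleGraph V) : Prop :=
  ∀ v u w : V, u < v → w < v → u ≠ w → G.Adj u v → G.Adj w v → G.Adj u w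

/-- A cycle (walk) in a graph has a chord. -/
def SimpleGraph.Walk.HasChord {G : SimpleGraph V} {v : V} (c : G.Walk v v) : Prop :=
  ∃ a b : V, a ∈ c.support ∧ b ∈ c.support ∧ G.Adj a b ∧ s(a, b) ∉ c.edges

/-- A graph is chordal if every cycle with more than three vertices has a chord. -/
def SimpleGraph.IsChordal (G : SimpleGraph V) : Prop :=
  ∀ (v : V) (c : G.Walk v v), c.IsCycle → 3 < c.length → c.HasChord

/-- `S` is the edge set of a cycle of `G`. -/
def IsCycleEdges [DecidableEq V] (G : SimpleGraph V) (S : Finset (Sym2 V)) : Prop :=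
  ∃ (v : V) (c : G.Walk v v), c.IsCycle ∧ c.edges.toFinset = S

/-- `S` is a broken circuit: there is an edge `e` smaller than every element of `S` such that
`S ∪ {e}` is the edge set of a cycle. -/
def IsBrokenCircuit [LinearOrder V] (G : SimpleGraph V) (S : Finset (Sym2 V)) : Prop :=
  ∃ e : Sym2 V, e ∉ S ∧ (∀ f ∈ S, edgeLT e f) ∧ IsCycleEdges G (insert e S)

/-- `S` is an nbc set: a set of edges of `G` no subset of which is a broken circuit. -/
def IsNBC [LinearOrder V] (G : SimpleGraph V) (S : Finset (Sym2 V)) : Prop :=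
  ↑S ⊆ G.edgeSet ∧ ∀ T ⊆ S, ¬IsBrokenCircuit G T

end Defs

section Aux

variable {V : Type*}

@[simp] lemma esup_mk [LinearOrder V] (a b : V) : esup s(a, b) = a ⊔ b := rfl

@[simp] lemma einf_mk [LinearOrder V] (a b : V) : einf s(a, b) = a ⊓ b := rfl

lemma einf_le_esup [LinearOrder V] (e : Sym2 V) : einf e ≤ esup e := by
  induction e using Sym2.ind with
  | _ a b => exact inf_le_sup

lemma mk_einf_esup [LinearOrder V] (e : Sym2 V) : s(einf e, esup e) = e := by
  induction e using Sym2.ind with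
  | _ a b =>
    rcases le_total a b with h | h
    · simp [inf_eq_left.mpr h, sup_eq_right.mpr h]
    · simp [inf_eq_right.mpr h, sup_eq_left.mpr h, Sym2.eq_swap]

lemma last_edge {G : SimpleGraph V} :
    ∀ {a b : V} (p : G.Walk a b), ¬p.Nil →
      ∃ w, G.Adj w b ∧ p.edges.getLast? = some s(w, b) := by
  intro a b p hp
  induction p with
  | nil => simp at hp
  | @cons a u b h q ih =>
    cases q with
    | nil => exact ⟨a, h, by simp⟩
    | @cons u u2 b h2 r =>
      obtain ⟨w, hw, hlast⟩ := ih (by simp)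
      refine ⟨w, hw, ?_⟩
      simp only [Walk.edges_cons] at hlast ⊢
      rw [List.getLast?_cons_cons]
      exact hlast

lemma key1 {G : SimpleGraph V} [LinearOrder V] {v : V} (c : G.Walk v v) (hc : c.IsCycle)
    (hmax : ∀ x ∈ c.support, x ≤ v) :
    ∃ e ∈ c.edges, ∃ f ∈ c.edges, e ≠ f ∧ esup e = v ∧ esup f = v := by
  cases c with
  | nil => exact absurd rfl hc.ne_nil
  | @cons v u v h p =>
    have hp : ¬p.Nil := by
      have := hc.three_le_length
      simp only [Walk.length_cons] at this
      rw [Walk.not_nil_iff_lt_length]; omega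
    obtain ⟨w, hw, hlast⟩ := last_edge p hp
    have hfp : s(w, v) ∈ p.edges := by
      rcases List.mem_getLast?_eq_getLast (by rw [hlast]; rfl) with ⟨hne, heq⟩
      rw [heq]; exact List.getLast_mem hne
    have hnodup := hc.edges_nodup
    rw [Walk.edges_cons, List.nodup_cons] at hnodup
    refine ⟨s(v, u), by simp, s(w, v), by simp [hfp], ?_, ?_, ?_⟩
    · intro h; exact hnodup.1 (by rw [h]; exact hfp)
    · have hu : u ≤ v := hmax u (by simp)
      simp [sup_eq_left.mpr hu]
    · have hwv : w ≤ v := hmax w (by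
        have := p.fst_mem_support_of_mem_edges hfp
        simp [this])
      simp [sup_eq_right.mpr hwv]

end Aux

/-- In a chordal graph with a perfect elimination ordering: the edge set of any cycle contains
two distinct edges with the same larger endpoint, and any two distinct edges with the same
larger endpoint are contained in a cycle with exactly 3 edges. -/
theorem stmt_2 {V : Type*} [Fintype V] [LinearOrder V] (G : SimpleGraph V)
    (hchordal : G.IsChordal) (hpeo : IsPEO G) :
    (∀ C : Finset (Sym2 V), IsCycleEdges G C →
        ∃ e ∈ C, ∃ f ∈ C, e ≠ f ∧ esup e = esup f) ∧
      (∀ e f : Sym2 V, e ∈ G.edgeSet → f ∈ G.edgeSet → e ≠ f → esup e = esup f →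
        ∃ T : Finset (Sym2 V), IsCycleEdges G T ∧ T.card = 3 ∧ e ∈ T ∧ f ∈ T) := by
  constructor
  · rintro C ⟨v, c, hc, rfl⟩
    have hne : c.support.toFinset.Nonempty := by
      simp [List.toFinset_nonempty_iff, c.support_ne_nil]
    set m := c.support.toFinset.max' hne with hm
    have hmem : m ∈ c.support := by
      have := c.support.toFinset.max'_mem hne
      simpa using this
    have hmax : ∀ x ∈ c.support, x ≤ m := fun x hx =>
      c.support.toFinset.le_max' x (by simpa using hx)
    set c' := c.rotate m hmem with hc'def
    have hc' : c'.IsCycle := hc.rotate hmem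
    have hmax' : ∀ x ∈ c'.support, x ≤ m := by
      intro x hx
      rw [c'.support_eq_cons] at hx
      rcases List.mem_cons.mp hx with rfl | hx
      · exact le_rfl
      · have := (c.support_rotate m hmem).mem_iff.mp hx
        exact hmax x (List.mem_of_mem_tail this)
    have hperm : List.Perm c'.edges c.edges := (c.rotate_edges m hmem).perm
    have htf : c'.edges.toFinset = c.edges.toFinset :=
      List.toFinset_eq_of_perm _ _ hperm
    obtain ⟨e, he, f, hf, hef, he2, hf2⟩ := key1 c' hc' hmax'
    exact ⟨e, by rw [← htf]; simpa using he, f, by rw [← htf]; simpa using hf,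
      hef, by rw [he2, hf2]⟩
  · intro e f he hf hef hsup
    have heq : s(einf e, esup e) = e := mk_einf_esup e
    have hfq : s(einf f, esup e) = f := by rw [hsup]; exact mk_einf_esup f
    set u := einf e with hu
    set w := einf f with hw
    set v := esup e with hv
    have hadj_uv : G.Adj u v := by rw [← SimpleGraph.mem_edgeSet, heq]; exact he
    have hadj_wv : G.Adj w v := by rw [← SimpleGraph.mem_edgeSet, hfq]; exact hf
    have hle_e : einf e ≤ esup e := einf_le_esup e
    have hle_f : einf f ≤ esup f := einf_le_esup f
    have huv : u < v := lt_of_le_of_ne hle_e hadj_uv.ne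
    have hwv : w < v := by
      have h6 : w ≤ esup f := hle_f
      rw [← hsup] at h6
      exact lt_of_le_of_ne h6 hadj_wv.ne
    have huw : u ≠ w := by
      intro h; apply hef; rw [← heq, ← hfq, h]
    have hadj_uw : G.Adj u w := hpeo v u w huv hwv huw hadj_uv hadj_wv
    let c : G.Walk v v := .cons hadj_uv.symm (.cons hadj_uw (.cons hadj_wv .nil))
    have hcyc : c.IsCycle := by
      constructor
      constructor
      constructor
      · simp [c, Sym2.eq, Sym2.rel_iff', huw, huv.ne, hwv.ne, huv.ne', hwv.ne',
          Ne.symm huw]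
      · simp [c]
      · simp only [c, Walk.support_cons, Walk.support_nil, List.tail_cons]
        simp [huw, huv.ne', hwv.ne', huv.ne, hwv.ne]
    have hedges : c.edges.toFinset = ({e, f, s(u, w)} : Finset (Sym2 V)) := by
      have hce : c.edges = [s(v, u), s(u, w), s(w, v)] := rfl
      rw [hce]
      have h1 : s(v, u) = e := by rw [← heq, Sym2.eq_swap]
      have h2 : s(w, v) = f := hfq
      rw [h1, h2]
      ext x; simp; tauto
    refine ⟨{e, f, s(u, w)}, ⟨v, c, hcyc, hedges⟩, ?_, by simp, by simp⟩
    have h3 : s(u, w) ≠ e := by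
      intro h
      have h5 := congrArg esup h
      rw [esup_mk, ← hv] at h5
      rcases le_total u w with h' | h'
      · rw [sup_eq_right.mpr h'] at h5; exact hwv.ne h5
      · rw [sup_eq_left.mpr h'] at h5; exact huv.ne h5
    have h4 : s(u, w) ≠ f := by
      intro h
      have h5 := congrArg esup h
      rw [esup_mk, ← hsup] at h5
      rcases le_total u w with h' | h'
      · rw [sup_eq_right.mpr h'] at h5; exact hwv.ne h5
      · rw [sup_eq_left.mpr h'] at h5; exact huv.ne h5
    rw [Finset.card_insert_of_notMem (by simp [hef, Ne.symm h3]),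
      Finset.card_insert_of_notMem (by simp [Ne.symm h4])]
    simp
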